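/- Let {⟨Xₙ, fₙ⟩ : n < ω} be an inverse sequence of continua in which every bonding map fₙ₊₁ : Xₙ₊₁ → Xₙ is a weakly confluent continuous surjection, let X_ω be its inverse limit and π₀ : X_ω → X₀ the projection. Then π₀ is a weakly confluent continuous surjection of the continuum X_ω onto X₀. -/

import Mathlib

universe u
open Set Function Topology

/-- A continuous surjection is weakly confluent if every subcontinuum of the range
is the image of a subcontinuum of the domain. -/
def WeaklyConfluent {Y X : Type*} [TopologicalSpace Y] [TopologicalSpace X]
    (f : Y → X) : Prop :=
  ∀ K : Set X, IsCompact K → IsConnected K →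
    ∃ L : Set Y, IsCompact L ∧ IsConnected L ∧ f '' L = K


theorem isConnected_iInter_nested {α : Type u} [TopologicalSpace α] [T2Space α]
    {D : ℕ → Set α} (hanti : Antitone D)
    (hc : ∀ n, IsCompact (D n)) (hconn : ∀ n, IsConnected (D n))
    (hne : (⋂ n, D n).Nonempty) : IsConnected (⋂ n, D n) := by
  set T := ⋂ n, D n with hTdef
  refine ⟨hne, ?_⟩
  rw [isPreconnected_closed_iff]
  rintro t t' ht ht' hcover ⟨x, hxT, hxt⟩ ⟨y, hyT, hyt'⟩
  by_contra hempty
  rw [Set.not_nonempty_iff_eq_empty] at hempty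
  have hTclosed : IsClosed T := isClosed_iInter fun n => (hc n).isClosed
  have hTc : IsCompact T := (hc 0).of_isClosed_subset hTclosed (iInter_subset _ 0)
  have hA : IsCompact (T ∩ t) := hTc.inter_right ht
  have hB : IsCompact (T ∩ t') := hTc.inter_right ht'
  have hdisj : Disjoint (T ∩ t) (T ∩ t') := by
    rw [Set.disjoint_iff_inter_eq_empty,
      show T ∩ t ∩ (T ∩ t') = T ∩ (t ∩ t') by ext z; simp only [mem_inter_iff]; tauto ]
    exact hempty
  obtain ⟨U, V, hU, hV, hAU, hBV, hUV⟩ := SeparatedNhds.of_isCompact_isCompact hA hB hdisj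
  have hTUV : T ⊆ U ∪ V := fun z hz => by
    rcases hcover hz with h | h
    · exact Or.inl (hAU ⟨hz, h⟩)
    · exact Or.inr (hBV ⟨hz, h⟩)
  have hex : ∃ n, D n ⊆ U ∪ V := by
    by_contra hno
    push_neg at hno
    have hne' : ∀ n, (D n ∩ (U ∪ V)ᶜ).Nonempty := fun n => by
      obtain ⟨z, hz, hz2⟩ := not_subset.mp (hno n)
      exact ⟨z, hz, hz2⟩
    have hdir : Directed (· ⊇ ·) (fun n => D n ∩ (U ∪ V)ᶜ) := fun m n =>
      ⟨max m n, inter_subset_inter_left _ (hanti (le_max_left m n)),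
        inter_subset_inter_left _ (hanti (le_max_right m n))⟩
    obtain ⟨z, hz⟩ := IsCompact.nonempty_iInter_of_directed_nonempty_isCompact_isClosed
      (fun n => D n ∩ (U ∪ V)ᶜ) hdir hne'
      (fun n => (hc n).inter_right (hU.union hV).isClosed_compl)
      (fun n => ((hc n).isClosed).inter (hU.union hV).isClosed_compl)
    have hz1 : z ∈ T := mem_iInter.mpr fun n => (mem_iInter.mp hz n).1
    exact (mem_iInter.mp hz 0).2 (hTUV hz1)
  obtain ⟨n, hn⟩ := hex
  have hxn : x ∈ D n ∩ U := ⟨mem_iInter.mp hxT n, hAU ⟨hxT, hxt⟩⟩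
  have hyn : y ∈ D n ∩ V := ⟨mem_iInter.mp hyT n, hBV ⟨hyT, hyt'⟩⟩
  obtain ⟨z, hzD, hzU, hzV⟩ := (hconn n).isPreconnected U V hU hV hn ⟨x, hxn⟩ ⟨y, hyn⟩
  exact (hUV.ne_of_mem hzU hzV) rfl


section Sigma
variable {X : ℕ → Type u} (f : ∀ n, X (n + 1) → X n)

/-- Correct the first `n` coordinates of `u` so that the thread condition holds below `n`. -/
def sigmaMap : ℕ → (∀ n, X n) → (∀ n, X n)
  | 0 => id
  | (n+1) => fun u => sigmaMap n (Function.update u n (f n (u (n+1))))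

theorem sigmaMap_ge : ∀ n (u : ∀ n, X n) k, n ≤ k → sigmaMap f n u k = u k := by
  intro n
  induction n with
  | zero => intro u k _; rfl
  | succ n ih =>
    intro u k hk
    have h1 : sigmaMap f (n+1) u k = (Function.update u n (f n (u (n+1)))) k :=
      ih _ k (Nat.le_of_succ_le hk)
    rw [h1, Function.update_of_ne (by omega)]

theorem sigmaMap_compat : ∀ n (u : ∀ n, X n) k, k < n →
    f k (sigmaMap f n u (k+1)) = sigmaMap f n u k := by
  intro n
  induction n with
  | zero => intro u k hk; omega
  | succ n ih =>
    intro u k hk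
    rcases Nat.lt_or_ge k n with h | h
    · exact ih _ k h
    · have hkn : k = n := by omega
      subst hkn
      have h1 : sigmaMap f (k+1) u (k+1) = u (k+1) := by
        have := sigmaMap_ge f k (Function.update u k (f k (u (k+1)))) (k+1) (by omega)
        rw [show sigmaMap f (k+1) u (k+1) = _ from this, Function.update_of_ne (by omega)]
      have h2 : sigmaMap f (k+1) u k = f k (u (k+1)) := by
        have := sigmaMap_ge f k (Function.update u k (f k (u (k+1)))) k le_rfl
        rw [show sigmaMap f (k+1) u k = _ from this, Function.update_self]
      rw [h1, h2]

theorem sigmaMap_fixed : ∀ n (u : ∀ n, X n), (∀ k, k < n → f k (u (k+1)) = u k) →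
    sigmaMap f n u = u := by
  intro n
  induction n with
  | zero => intro u _; rfl
  | succ n ih =>
    intro u hu
    have : Function.update u n (f n (u (n+1))) = u := by
      rw [hu n (by omega)]; exact Function.update_eq_self n u
    show sigmaMap f n (Function.update u n (f n (u (n+1)))) = u
    rw [this]; exact ih u (fun k hk => hu k (by omega))

theorem sigmaMap_continuous [∀ n, TopologicalSpace (X n)] (hfc : ∀ n, Continuous (f n)) :
    ∀ n, Continuous (sigmaMap f n) := by
  intro n
  induction n with
  | zero => exact continuous_id
  | succ n ih =>
    show Continuous fun u => sigmaMap f n (Function.update u n (f n (u (n+1))))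
    refine ih.comp ?_
    refine continuous_pi fun k => ?_
    rcases eq_or_ne k n with rfl | hk
    · simp only [Function.update_self]
      exact (hfc k).comp (continuous_apply (k+1))
    · simp only [Function.update_of_ne hk]
      exact continuous_apply k

theorem sigmaMap_mem (S : ∀ n, Set (X n)) (hmap : ∀ n x, x ∈ S (n+1) → f n x ∈ S n) :
    ∀ n (u : ∀ n, X n), (∀ k, u k ∈ S k) → ∀ k, sigmaMap f n u k ∈ S k := by
  intro n
  induction n with
  | zero => intro u hu k; exact hu k
  | succ n ih =>
    intro u hu k
    refine ih _ (fun j => ?_) k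
    rcases eq_or_ne j n with rfl | hj
    · rw [Function.update_self]; exact hmap j _ (hu (j+1))
    · rw [Function.update_of_ne hj]; exact hu j

end Sigma


theorem key {X : ℕ → Type u} [∀ n, TopologicalSpace (X n)] [∀ n, T2Space (X n)]
    (f : ∀ n, X (n+1) → X n) (hfc : ∀ n, Continuous (f n))
    (S : ∀ n, Set (X n)) (hSc : ∀ n, IsCompact (S n)) (hScon : ∀ n, IsConnected (S n))
    (hmap : ∀ n, f n '' S (n+1) = S n) :
    IsCompact {u : ∀ n, X n | (∀ n, f n (u (n+1)) = u n) ∧ ∀ n, u n ∈ S n} ∧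
    IsConnected {u : ∀ n, X n | (∀ n, f n (u (n+1)) = u n) ∧ ∀ n, u n ∈ S n} ∧
    (fun u : ∀ n, X n => u 0) '' {u : ∀ n, X n | (∀ n, f n (u (n+1)) = u n) ∧ ∀ n, u n ∈ S n}
      = S 0 := by
  have hmap' : ∀ n x, x ∈ S (n+1) → f n x ∈ S n := fun n x hx => by
    rw [← hmap n]; exact mem_image_of_mem _ hx
  set T := {u : ∀ n, X n | (∀ n, f n (u (n+1)) = u n) ∧ ∀ n, u n ∈ S n} with hTdef
  set D : ℕ → Set (∀ n, X n) :=
    fun n => {u | (∀ k, k < n → f k (u (k+1)) = u k) ∧ ∀ k, u k ∈ S k} with hDdef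
  have hDimg : ∀ n, D n = sigmaMap f n '' (univ.pi S) := by
    intro n
    apply Subset.antisymm
    · intro u hu
      exact ⟨u, fun k _ => hu.2 k, sigmaMap_fixed f n u hu.1⟩
    · rintro _ ⟨v, hv, rfl⟩
      exact ⟨fun k hk => sigmaMap_compat f n v k hk,
        sigmaMap_mem f S hmap' n v (fun k => hv k (mem_univ k))⟩
  have hpic : IsCompact (univ.pi S) := isCompact_univ_pi hSc
  have hpiconn : IsConnected (univ.pi S) := isConnected_univ_pi.mpr hScon
  have hDc : ∀ n, IsCompact (D n) := fun n => by
    rw [hDimg n]; exact hpic.image (sigmaMap_continuous f hfc n)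
  have hDconn : ∀ n, IsConnected (D n) := fun n => by
    rw [hDimg n]; exact hpiconn.image _ (sigmaMap_continuous f hfc n).continuousOn
  have hanti : Antitone D := antitone_nat_of_succ_le fun n u hu =>
    ⟨fun k hk => hu.1 k (by omega), hu.2⟩
  have hT : T = ⋂ n, D n := by
    ext u
    simp only [hTdef, hDdef, mem_iInter, mem_setOf_eq]
    constructor
    · exact fun h n => ⟨fun k _ => h.1 k, h.2⟩
    · exact fun h => ⟨fun n => (h (n+1)).1 n (Nat.lt_succ_self n), fun k => (h 0).2 k⟩
  have hthread : ∀ x ∈ S 0, ∃ u, u ∈ T ∧ u 0 = x := by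
    intro x hx
    have hsur : ∀ n (p : {y : X n // y ∈ S n}),
        ∃ y : {y : X (n+1) // y ∈ S (n+1)}, f n y.1 = p.1 := by
      intro n p
      have hp : (p : X n) ∈ f n '' S (n+1) := by rw [hmap n]; exact p.2
      obtain ⟨y, hy, hfy⟩ := hp
      exact ⟨⟨y, hy⟩, hfy⟩
    choose g hg using hsur
    refine ⟨fun n => (Nat.rec ⟨x, hx⟩ g n : {y : X n // y ∈ S n}).1,
      ⟨fun n => hg n _, fun n => (Nat.rec ⟨x, hx⟩ g n : {y : X n // y ∈ S n}).2⟩, rfl⟩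
  have hTne : T.Nonempty := by
    obtain ⟨x, hx⟩ := (hScon 0).nonempty
    obtain ⟨u, hu, _⟩ := hthread x hx
    exact ⟨u, hu⟩
  have hTclosed : IsClosed T := by
    rw [hT]; exact isClosed_iInter fun n => (hDc n).isClosed
  have hTc : IsCompact T := by
    refine (hDc 0).of_isClosed_subset hTclosed ?_
    rw [hT]; exact iInter_subset _ 0
  have hTconn : IsConnected T := by
    rw [hT]
    exact isConnected_iInter_nested hanti hDc hDconn (hT ▸ hTne)
  refine ⟨hTc, hTconn, ?_⟩
  apply Subset.antisymm
  · rintro _ ⟨u, hu, rfl⟩; exact hu.2 0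
  · intro x hx
    obtain ⟨u, hu, hu0⟩ := hthread x hx
    exact ⟨u, hu, hu0⟩

/-- The inverse limit of an inverse sequence of continua with weakly confluent
continuous surjective bonding maps is a continuum, and the projection to the
first space is a weakly confluent continuous surjection. -/
theorem inverseLimit_weakly_confluent (X : ℕ → Type u)
    [∀ n, TopologicalSpace (X n)] [∀ n, CompactSpace (X n)] [∀ n, T2Space (X n)]
    [∀ n, ConnectedSpace (X n)]
    (f : ∀ n, X (n + 1) → X n) (hfc : ∀ n, Continuous (f n))
    (hfs : ∀ n, Function.Surjective (f n))
    (hfw : ∀ n, WeaklyConfluent (f n)) :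
    let Xω := {u : ∀ n, X n // ∀ n, f n (u (n + 1)) = u n}
    let π₀ : Xω → X 0 := fun u => u.val 0
    CompactSpace Xω ∧ T2Space Xω ∧ ConnectedSpace Xω ∧
    Continuous π₀ ∧ Function.Surjective π₀ ∧ WeaklyConfluent π₀ := by
  intro Xω π₀
  obtain ⟨hc, hconn, himg⟩ := key f hfc (fun n => (univ : Set (X n)))
    (fun _ => isCompact_univ) (fun _ => isConnected_univ)
    (fun n => by rw [image_univ]; exact Set.range_eq_univ.mpr (hfs n))
  have hset : {u : ∀ n, X n | (∀ n, f n (u (n+1)) = u n) ∧ ∀ n, u n ∈ (univ : Set (X n))}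
      = {u | ∀ n, f n (u (n+1)) = u n} := by ext u; simp
  rw [hset] at hc hconn himg
  haveI hXc : CompactSpace Xω := isCompact_iff_compactSpace.mp hc
  haveI hXt2 : T2Space Xω := inferInstance
  haveI hXconn : ConnectedSpace Xω := Subtype.connectedSpace hconn
  have hπc : Continuous π₀ := (continuous_apply 0).comp continuous_subtype_val
  have hπs : Function.Surjective π₀ := by
    intro x
    have hx : x ∈ (fun u : ∀ n, X n => u 0) '' {u | ∀ n, f n (u (n+1)) = u n} := by
      rw [himg]; trivial
    obtain ⟨u, hu, h0⟩ := hx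
    exact ⟨⟨u, hu⟩, h0⟩
  refine ⟨hXc, hXt2, hXconn, hπc, hπs, ?_⟩
  intro K hKc hKconn
  have step : ∀ n (P : {A : Set (X n) // IsCompact A ∧ IsConnected A}),
      ∃ Q : {A : Set (X (n+1)) // IsCompact A ∧ IsConnected A}, f n '' Q.1 = P.1 := by
    intro n P
    obtain ⟨L, h1, h2, h3⟩ := hfw n P.1 P.2.1 P.2.2
    exact ⟨⟨L, h1, h2⟩, h3⟩
  choose g hg using step
  set Sc : ∀ n, {A : Set (X n) // IsCompact A ∧ IsConnected A} :=
    fun n => Nat.rec ⟨K, hKc, hKconn⟩ g n with hScdef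
  obtain ⟨hTc, hTconn, hTimg⟩ := key f hfc (fun n => (Sc n).1)
    (fun n => (Sc n).2.1) (fun n => (Sc n).2.2) (fun n => hg n _)
  set T := {u : ∀ n, X n | (∀ n, f n (u (n+1)) = u n) ∧ ∀ n, u n ∈ (Sc n).1} with hTdef
  have hS0 : (Sc 0).1 = K := rfl
  have hTrange : T ⊆ Set.range (Subtype.val : Xω → ∀ n, X n) := by
    intro u hu
    rw [Subtype.range_coe_subtype]
    exact hu.1
  set L : Set Xω := Subtype.val ⁻¹' T with hLdef
  have hvalL : Subtype.val '' L = T := by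
    rw [hLdef, Set.image_preimage_eq_inter_range, inter_eq_left.mpr hTrange]
  have hclemb : Topology.IsClosedEmbedding (Subtype.val : Xω → ∀ n, X n) :=
    continuous_subtype_val.isClosedEmbedding Subtype.val_injective
  refine ⟨L, hclemb.isCompact_preimage hTc, ?_, ?_⟩
  · constructor
    · obtain ⟨u, hu⟩ := hTconn.nonempty
      obtain ⟨v, rfl⟩ := hTrange hu
      exact ⟨v, hu⟩
    · have hind : Topology.IsInducing (Subtype.val : Xω → ∀ n, X n) :=
        Topology.IsInducing.subtypeVal
      exact hind.isPreconnected_image.mp (hvalL ▸ hTconn.isPreconnected)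
  · have himg2 : π₀ '' L = (fun u : ∀ n, X n => u 0) '' (Subtype.val '' L) := by
      rw [Set.image_image]
    rw [himg2, hvalL, hTimg]
    exact hS0
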